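/- Let f : [0,1] → ℝ be of bounded variation and let X ⊆ [0,1] be a set that is a union of at most n+1 pairwise disjoint subintervals. Then Var(f·𝟙_X) ≤ Var(f) + 2(n+1)·sup_{x}|f(x)|. -/

import Mathlib

open MeasureTheory Set

/-- For `f` of bounded variation on `[0,1]` and `X ⊆ [0,1]` a union of at most
`n+1` pairwise disjoint subintervals, `Var(f·𝟙_X) ≤ Var(f) + 2(n+1)·sup|f|`. -/
theorem variation_indicator_union_intervals_le
    (f : ℝ → ℝ) (hf : BoundedVariationOn f (Set.Icc 0 1))
    (n : ℕ) (a b : Fin (n + 1) → ℝ) (X : Set ℝ)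
    (hX : X = ⋃ i, Set.Icc (a i) (b i))
    (hdisj : Pairwise fun i j => Disjoint (Set.Icc (a i) (b i)) (Set.Icc (a j) (b j)))
    (hsub : X ⊆ Set.Icc (0:ℝ) 1) :
    eVariationOn (X.indicator f) (Set.Icc 0 1) ≤
      eVariationOn f (Set.Icc 0 1) +
        ((2 * (n + 1) : ℕ) : ENNReal) * ENNReal.ofReal (⨆ x ∈ Set.Icc (0:ℝ) 1, |f x|) := by
  classical
  set M : ℝ := ⨆ x ∈ Set.Icc (0:ℝ) 1, |f x| with hM
  -- boundedness of |f| on Icc 0 1 and |f x| ≤ M for x in Icc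
  have h0 : (0:ℝ) ∈ Set.Icc (0:ℝ) 1 := by norm_num
  have hbdd : BddAbove ((fun x => |f x|) '' Set.Icc (0:ℝ) 1) := by
    refine ⟨|f 0| + (eVariationOn f (Set.Icc (0:ℝ) 1)).toReal, ?_⟩
    rintro y ⟨x, hx, rfl⟩
    have hd : dist (f x) (f 0) ≤ (eVariationOn f (Set.Icc (0:ℝ) 1)).toReal := by
      rw [dist_edist]
      exact ENNReal.toReal_mono hf (eVariationOn.edist_le f hx h0)
    calc |f x| ≤ |f 0| + |f x - f 0| := by
          have := abs_sub_abs_le_abs_sub (f x) (f 0); linarith [abs_nonneg (f x - f 0)]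
      _ ≤ |f 0| + (eVariationOn f (Set.Icc (0:ℝ) 1)).toReal := by
          rw [Real.dist_eq] at hd; linarith
  have hfb : ∀ x ∈ Set.Icc (0:ℝ) 1, |f x| ≤ M := by
    intro x hx
    obtain ⟨C, hC⟩ := hbdd
    have hbdd2 : BddAbove (Set.range fun x => ⨆ _ : x ∈ Set.Icc (0:ℝ) 1, |f x|) := by
      refine ⟨max C 0, ?_⟩
      rintro y ⟨z, rfl⟩
      dsimp only
      by_cases hz : z ∈ Set.Icc (0:ℝ) 1
      · rw [ciSup_pos hz]
        exact le_max_of_le_left (hC ⟨z, hz, rfl⟩)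
      · have : IsEmpty (z ∈ Set.Icc (0:ℝ) 1) := ⟨hz⟩
        rw [Real.iSup_of_isEmpty]
        exact le_max_right _ _
    have := le_ciSup hbdd2 x
    rwa [ciSup_pos hx] at this
  subst hX
  set X : Set ℝ := ⋃ i, Set.Icc (a i) (b i) with hX
  set g : ℝ → ℝ := X.indicator f with hg
  refine iSup_le ?_
  rintro ⟨m, u, hu, us⟩
  simp only
  -- per-term bound
  have key : ∀ i ∈ Finset.range m,
      edist (g (u (i+1))) (g (u i)) ≤ edist (f (u (i+1))) (f (u i)) +
        (if (u i ∈ X ↔ u (i+1) ∈ X) then 0 else ENNReal.ofReal M) := by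
    intro i _
    by_cases h1 : u i ∈ X <;> by_cases h2 : u (i+1) ∈ X
    · simp only [hg, Set.indicator_of_mem h1, Set.indicator_of_mem h2, if_pos (iff_of_true h1 h2),
        add_zero, le_refl]
    · rw [if_neg (by tauto)]
      have : g (u (i+1)) = 0 := Set.indicator_of_notMem h2 f
      rw [this, hg, Set.indicator_of_mem h1]
      calc edist (0:ℝ) (f (u i)) = ENNReal.ofReal |f (u i)| := by
            rw [edist_dist, Real.dist_eq, zero_sub, abs_neg]
        _ ≤ ENNReal.ofReal M := ENNReal.ofReal_le_ofReal (hfb _ (hsub h1))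
        _ ≤ _ := le_add_self
    · rw [if_neg (by tauto)]
      have : g (u i) = 0 := Set.indicator_of_notMem h1 f
      rw [this, hg, Set.indicator_of_mem h2]
      calc edist (f (u (i+1))) (0:ℝ) = ENNReal.ofReal |f (u (i+1))| := by
            rw [edist_dist, Real.dist_eq, sub_zero]
        _ ≤ ENNReal.ofReal M := ENNReal.ofReal_le_ofReal (hfb _ (hsub h2))
        _ ≤ _ := le_add_self
    · simp only [hg, Set.indicator_of_notMem h1, Set.indicator_of_notMem h2,
        if_pos (iff_of_false h1 h2), edist_self]
      exact zero_le
  -- the crossing set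
  set B : Finset ℕ := (Finset.range m).filter (fun i => ¬ (u i ∈ X ↔ u (i+1) ∈ X)) with hB
  have hBcard : B.card ≤ 2 * (n + 1) := by
    set Bin : Finset ℕ := (Finset.range m).filter (fun i => u i ∉ X ∧ u (i+1) ∈ X) with hBin
    set Bout : Finset ℕ := (Finset.range m).filter (fun i => u i ∈ X ∧ u (i+1) ∉ X) with hBout
    have hsubB : B ⊆ Bin ∪ Bout := by
      intro i hi
      simp only [hB, Finset.mem_filter] at hi
      simp only [hBin, hBout, Finset.mem_union, Finset.mem_filter]
      tauto
    have hin : Bin.card ≤ n + 1 := by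
      have hex : ∀ i, u (i+1) ∈ X → ∃ j : Fin (n+1), u (i+1) ∈ Set.Icc (a j) (b j) := by
        intro i hi; exact Set.mem_iUnion.mp hi
      set φ : ℕ → Fin (n+1) := fun i =>
        if h : ∃ j : Fin (n+1), u (i+1) ∈ Set.Icc (a j) (b j) then h.choose else 0 with hφ
      have hφmem : ∀ i, u (i+1) ∈ X → u (i+1) ∈ Set.Icc (a (φ i)) (b (φ i)) := by
        intro i hi
        have h := hex i hi
        simp only [hφ, dif_pos h]
        exact h.choose_spec
      have := Finset.card_le_card_of_injOn (s := Bin) (t := Finset.univ) φ (fun i _ => Finset.mem_univ _) ?_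
      · simpa using this
      · intro i hi i' hi' hφeq
        simp only [hBin, Finset.mem_filter, Finset.coe_filter, Set.mem_setOf_eq] at hi hi'
        rcases lt_trichotomy i i' with h | h | h
        · exfalso
          have m1 := hφmem i hi.2.2
          have m2 := hφmem i' hi'.2.2
          rw [hφeq] at m1
          have : u i' ∈ Set.Icc (a (φ i')) (b (φ i')) :=
            ⟨m1.1.trans (hu (Nat.succ_le_of_lt h)), le_trans (hu (Nat.le_succ i')) m2.2⟩
          exact hi'.2.1 (Set.mem_iUnion.mpr ⟨φ i', this⟩)
        · exact h
        · exfalso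
          have m1 := hφmem i' hi'.2.2
          have m2 := hφmem i hi.2.2
          rw [← hφeq] at m1
          have : u i ∈ Set.Icc (a (φ i)) (b (φ i)) :=
            ⟨m1.1.trans (hu (Nat.succ_le_of_lt h)), le_trans (hu (Nat.le_succ i)) m2.2⟩
          exact hi.2.1 (Set.mem_iUnion.mpr ⟨φ i, this⟩)
    have hout : Bout.card ≤ n + 1 := by
      have hex : ∀ i, u i ∈ X → ∃ j : Fin (n+1), u i ∈ Set.Icc (a j) (b j) := by
        intro i hi; exact Set.mem_iUnion.mp hi
      set φ : ℕ → Fin (n+1) := fun i =>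
        if h : ∃ j : Fin (n+1), u i ∈ Set.Icc (a j) (b j) then h.choose else 0 with hφ
      have hφmem : ∀ i, u i ∈ X → u i ∈ Set.Icc (a (φ i)) (b (φ i)) := by
        intro i hi
        have h := hex i hi
        simp only [hφ, dif_pos h]
        exact h.choose_spec
      have := Finset.card_le_card_of_injOn (s := Bout) (t := Finset.univ) φ (fun i _ => Finset.mem_univ _) ?_
      · simpa using this
      · intro i hi i' hi' hφeq
        simp only [hBout, Finset.mem_filter, Finset.coe_filter, Set.mem_setOf_eq] at hi hi'
        rcases lt_trichotomy i i' with h | h | h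
        · exfalso
          have m1 := hφmem i hi.2.1
          have m2 := hφmem i' hi'.2.1
          rw [hφeq] at m1
          have : u (i+1) ∈ Set.Icc (a (φ i')) (b (φ i')) :=
            ⟨m1.1.trans (hu (Nat.le_succ i)), le_trans (hu (Nat.succ_le_of_lt h)) m2.2⟩
          exact hi.2.2 (Set.mem_iUnion.mpr ⟨φ i', this⟩)
        · exact h
        · exfalso
          have m1 := hφmem i' hi'.2.1
          have m2 := hφmem i hi.2.1
          rw [← hφeq] at m1
          have : u (i'+1) ∈ Set.Icc (a (φ i)) (b (φ i)) :=
            ⟨m1.1.trans (hu (Nat.le_succ i')), le_trans (hu (Nat.succ_le_of_lt h)) m2.2⟩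
          exact hi'.2.2 (Set.mem_iUnion.mpr ⟨φ i, this⟩)
    calc B.card ≤ (Bin ∪ Bout).card := Finset.card_le_card hsubB
      _ ≤ Bin.card + Bout.card := Finset.card_union_le _ _
      _ ≤ (n+1) + (n+1) := add_le_add hin hout
      _ = 2 * (n+1) := by ring
  calc ∑ i ∈ Finset.range m, edist (g (u (i+1))) (g (u i))
      ≤ ∑ i ∈ Finset.range m, (edist (f (u (i+1))) (f (u i)) +
          (if (u i ∈ X ↔ u (i+1) ∈ X) then 0 else ENNReal.ofReal M)) :=
        Finset.sum_le_sum key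
    _ = (∑ i ∈ Finset.range m, edist (f (u (i+1))) (f (u i))) +
          ∑ i ∈ Finset.range m, (if (u i ∈ X ↔ u (i+1) ∈ X) then 0 else ENNReal.ofReal M) :=
        Finset.sum_add_distrib
    _ ≤ eVariationOn f (Set.Icc 0 1) + (B.card : ENNReal) * ENNReal.ofReal M := by
        gcongr
        · exact eVariationOn.sum_le (f := f) (n := m) hu us
        · rw [Finset.sum_ite, Finset.sum_const, Finset.sum_const, smul_zero, zero_add,
            nsmul_eq_mul]
    _ ≤ eVariationOn f (Set.Icc 0 1) +
          ((2 * (n + 1) : ℕ) : ENNReal) * ENNReal.ofReal M := by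
        have : (B.card : ENNReal) ≤ ((2 * (n + 1) : ℕ) : ENNReal) := by exact_mod_cast hBcard
        exact add_le_add_right (mul_le_mul_left this _) _
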